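/- arXiv:2009.10654 — 3 statements merged into one kernel-verified Lean document; each statement's English description precedes it below -/
import Mathlib

section
/- Let 1/2 < α < 1, γ > 0 and t > 0. Then (γ / Γ(2α−1)) · ∫₀ᵗ (t−s)^{2α−2} · E_{2α−1}(γ s^{2α−1}) ds = E_{2α−1}(γ t^{2α−1}) − 1, where the integral is the (interval) Lebesgue integral over s ∈ (0, t). -/
open Real Filter MeasureTheory intervalIntegral Topology



/-- The one-parameter Mittag-Leffler function `E_β(z) = Σ_{k=0}^∞ z^k / Γ(kβ + 1)`. -/
noncomputable def mittagLeffler (β z : ℝ) : ℝ :=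
  ∑' k : ℕ, z ^ k / Real.Gamma ((k : ℝ) * β + 1)


lemma gamma_ratio {β x : ℝ} (hβ : 0 < β) (hβ1 : β ≤ 1) (hx : 0 < x) :
    x * Real.Gamma x ≤ Real.Gamma (x + β) * (x + β) ^ (1 - β) := by
  have hxβ : 0 < x + β := by linarith
  have hΓx : 0 < Real.Gamma x := Real.Gamma_pos_of_pos hx
  have hΓxβ : 0 < Real.Gamma (x + β) := Real.Gamma_pos_of_pos hxβ
  have hconv := Real.convexOn_log_Gamma.2 (Set.mem_Ioi.2 hxβ)
    (Set.mem_Ioi.2 (by linarith : (0:ℝ) < x + β + 1)) (le_of_lt hβ)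
    (by linarith : (0:ℝ) ≤ 1 - β) (by ring)
  have harg : β • (x + β) + (1 - β) • (x + β + 1) = x + 1 := by
    simp [smul_eq_mul]; ring
  rw [harg] at hconv
  simp only [Function.comp_apply, smul_eq_mul] at hconv
  rw [Real.Gamma_add_one hx.ne', Real.Gamma_add_one hxβ.ne'] at hconv
  rw [Real.log_mul hx.ne' hΓx.ne', Real.log_mul hxβ.ne' hΓxβ.ne'] at hconv
  have key : Real.log (x * Real.Gamma x) ≤
      Real.log (Real.Gamma (x + β) * (x + β) ^ (1 - β)) := by
    rw [Real.log_mul hx.ne' hΓx.ne',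
      Real.log_mul hΓxβ.ne' (by positivity : ((x + β) ^ (1 - β) : ℝ) ≠ 0),
      Real.log_rpow hxβ]
    nlinarith [hconv]
  have := Real.exp_le_exp.2 key
  rwa [Real.exp_log (by positivity), Real.exp_log (by positivity)] at this

lemma summable_ML {β : ℝ} (hβ : 0 < β) (hβ1 : β ≤ 1) {z : ℝ} (hz : 0 ≤ z) :
    Summable (fun k : ℕ => z ^ k / Real.Gamma ((k : ℝ) * β + 1)) := by
  have hx : ∀ k : ℕ, (0:ℝ) < (k : ℝ) * β + 1 := fun k => by positivity
  refine summable_of_ratio_norm_eventually_le (r := 1/2) (by norm_num) ?_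
  have htendsto : Tendsto (fun k : ℕ => z * (2 * ((k : ℝ) * β + 1) ^ (-β)))
      atTop (𝓝 0) := by
    have h1 : Tendsto (fun k : ℕ => ((k : ℝ) * β + 1)) atTop atTop :=
      tendsto_atTop_add_const_right _ 1
        (Tendsto.atTop_mul_const hβ tendsto_natCast_atTop_atTop)
    have h2 := (tendsto_rpow_neg_atTop hβ).comp h1
    have := (h2.const_mul 2).const_mul z
    simpa using this
  have hev : ∀ᶠ k : ℕ in atTop, z * (2 * ((k : ℝ) * β + 1) ^ (-β)) ≤ 1/2 :=
    htendsto.eventually_le_const (by norm_num)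
  filter_upwards [hev] with k hk
  set x : ℝ := (k : ℝ) * β + 1 with hxdef
  have hx0 : 0 < x := hx k
  have hx1 : 1 ≤ x := by
    have : (0:ℝ) ≤ (k : ℝ) * β := by positivity
    simp [hxdef]; linarith
  have hxβ : 0 < x + β := by linarith
  have hΓx : 0 < Real.Gamma x := Real.Gamma_pos_of_pos hx0
  have hΓxβ : 0 < Real.Gamma (x + β) := Real.Gamma_pos_of_pos hxβ
  have hexp : ((k+1 : ℕ) : ℝ) * β + 1 = x + β := by push_cast [hxdef]; ring
  rw [hexp]
  rw [Real.norm_eq_abs, Real.norm_eq_abs, abs_of_nonneg (by positivity),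
    abs_of_nonneg (by positivity)]
  rw [div_le_iff₀ hΓxβ, pow_succ, mul_comm (z^k) z]
  have hstep : z * Real.Gamma x ≤ 1/2 * Real.Gamma (x + β) := by
    -- use gamma_ratio : x * Γ x ≤ Γ(x+β) (x+β)^(1-β)
    have hG := gamma_ratio hβ hβ1 hx0
    -- (x+β)^(1-β) ≤ 2 * x^(1-β)
    have hb1 : (x + β) ^ (1-β) ≤ (2*x) ^ (1-β) := by
      apply Real.rpow_le_rpow hxβ.le (by linarith) (by linarith)
    have hb2 : (2*x) ^ (1-β) ≤ 2 * x ^ (1-β) := by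
      rw [Real.mul_rpow (by norm_num) hx0.le]
      gcongr
      calc (2:ℝ) ^ (1-β) ≤ 2 ^ (1:ℝ) :=
        Real.rpow_le_rpow_of_exponent_le (by norm_num) (by linarith)
      _ = 2 := by norm_num
    -- so Γ x ≤ Γ(x+β) * 2 * x^(1-β) / x = 2 Γ(x+β) x^(-β)
    have hGx : Real.Gamma x ≤ Real.Gamma (x + β) * (2 * x ^ (-β)) := by
      have h3 : x * Real.Gamma x ≤ Real.Gamma (x+β) * (2 * x ^ (1-β)) := by
        calc x * Real.Gamma x ≤ Real.Gamma (x + β) * (x + β) ^ (1 - β) := hG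
        _ ≤ Real.Gamma (x+β) * (2 * x ^ (1-β)) := by
            refine mul_le_mul_of_nonneg_left (hb1.trans hb2) hΓxβ.le
      have hxpow : x ^ (1-β) = x * x ^ (-β) := by
        rw [show (1-β : ℝ) = 1 + (-β) by ring, Real.rpow_add hx0, Real.rpow_one]
      rw [hxpow] at h3
      nlinarith [h3, hx0]
    calc z * Real.Gamma x ≤ z * (Real.Gamma (x + β) * (2 * x ^ (-β))) := by
          exact mul_le_mul_of_nonneg_left hGx hz
    _ = (z * (2 * x ^ (-β))) * Real.Gamma (x + β) := by ring
    _ ≤ 1/2 * Real.Gamma (x + β) := by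
        exact mul_le_mul_of_nonneg_right hk hΓxβ.le
  have h4 := mul_le_mul_of_nonneg_right hstep
    (show (0:ℝ) ≤ z^k / Real.Gamma x by positivity)
  have h5 : z * Real.Gamma x * (z^k / Real.Gamma x) = z * z^k := by
    field_simp
  rw [h5] at h4
  nlinarith [h4]

lemma beta_real {a b t : ℝ} (ha : 0 < a) (hb : 0 < b) (ht : 0 < t) :
    ∫ s in (0:ℝ)..t, s ^ (a-1) * (t - s) ^ (b-1) =
      Real.Gamma a * Real.Gamma b / Real.Gamma (a+b) * t ^ (a+b-1) := by
  have hscaled := Complex.betaIntegral_scaled (a:ℂ) (b:ℂ) ht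
  have hgb := Complex.Gamma_mul_Gamma_eq_betaIntegral
    (s := (a:ℂ)) (t := (b:ℂ)) (by simpa using ha) (by simpa using hb)
  have hab : (0:ℝ) < a + b := by linarith
  have hΓab : Complex.Gamma ((a:ℂ) + (b:ℂ)) ≠ 0 :=
    Complex.Gamma_ne_zero_of_re_pos (by simpa using hab)
  have hbeta : Complex.betaIntegral (a:ℂ) (b:ℂ) =
      Complex.Gamma a * Complex.Gamma b / Complex.Gamma ((a:ℂ) + b) := by
    field_simp [hgb]
    rw [hgb]; ring
  have hcongr : ∫ s in (0:ℝ)..t, ((s ^ (a-1) * (t - s) ^ (b-1) : ℝ) : ℂ) =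
      ∫ s in (0:ℝ)..t, (s:ℂ) ^ ((a:ℂ)-1) * ((t:ℂ) - s) ^ ((b:ℂ)-1) := by
    refine intervalIntegral.integral_congr fun s hs => ?_
    rw [Set.uIcc_of_le ht.le] at hs
    rw [show ((a:ℂ)-1) = ((a-1:ℝ):ℂ) by push_cast; ring,
      show ((b:ℂ)-1) = ((b-1:ℝ):ℂ) by push_cast; ring,
      show ((t:ℂ)-(s:ℂ)) = ((t-s:ℝ):ℂ) by push_cast; ring,
      ← Complex.ofReal_cpow hs.1,
      ← Complex.ofReal_cpow (by linarith [hs.2] : (0:ℝ) ≤ t - s)]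
    push_cast
    ring
  have hlhs : (((∫ s in (0:ℝ)..t, s ^ (a-1) * (t - s) ^ (b-1)) : ℝ) : ℂ) =
      (t:ℂ) ^ ((a:ℂ) + b - 1) * Complex.betaIntegral (a:ℂ) (b:ℂ) := by
    rw [← intervalIntegral.integral_ofReal, hcongr, hscaled]
  rw [hbeta] at hlhs
  have hrhs : (t:ℂ) ^ ((a:ℂ) + b - 1) *
      (Complex.Gamma a * Complex.Gamma b / Complex.Gamma ((a:ℂ) + b)) =
      ((Real.Gamma a * Real.Gamma b / Real.Gamma (a+b) * t ^ (a+b-1) : ℝ) : ℂ) := by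
    rw [show ((a:ℂ) + b - 1) = ((a + b - 1 : ℝ) : ℂ) by push_cast; ring,
      ← Complex.ofReal_cpow ht.le,
      show ((a:ℂ) + b) = ((a + b : ℝ) : ℂ) by push_cast; ring,
      Complex.Gamma_ofReal, Complex.Gamma_ofReal, Complex.Gamma_ofReal]
    push_cast
    ring
  rw [hrhs] at hlhs
  exact_mod_cast hlhs

/-- Lemma 2.6, equality form: for `1/2 < α < 1`, `γ > 0` and `t > 0`,
`(γ / Γ(2α−1)) ∫₀ᵗ (t−s)^{2α−2} E_{2α−1}(γ s^{2α−1}) ds = E_{2α−1}(γ t^{2α−1}) − 1`. -/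
theorem mittagLeffler_integral_eq (α γ t : ℝ) (hα : 1 / 2 < α) (hα' : α < 1)
    (hγ : 0 < γ) (ht : 0 < t) :
    γ / Real.Gamma (2 * α - 1) *
        ∫ s in (0 : ℝ)..t,
          (t - s) ^ (2 * α - 2) * mittagLeffler (2 * α - 1) (γ * s ^ (2 * α - 1)) =
      mittagLeffler (2 * α - 1) (γ * t ^ (2 * α - 1)) - 1 := by
  set β : ℝ := 2 * α - 1 with hβdef
  have hβ : 0 < β := by simp [hβdef]; linarith
  have hβ1 : β ≤ 1 := by simp [hβdef]; linarith
  have hΓβ : 0 < Real.Gamma β := Real.Gamma_pos_of_pos hβ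
  have h2a2 : 2 * α - 2 = β - 1 := by simp [hβdef]; ring
  -- the summand functions
  set F : ℕ → ℝ → ℝ := fun k s =>
    (t - s) ^ (β - 1) * (γ ^ k * s ^ ((k : ℝ) * β) / Real.Gamma ((k : ℝ) * β + 1))
    with hFdef
  -- each F k is integrable on Ioc 0 t
  have hFint : ∀ k : ℕ, IntegrableOn (F k) (Set.Ioc 0 t) volume := by
    intro k
    rw [← intervalIntegrable_iff_integrableOn_Ioc_of_le ht.le]
    have h1 : IntervalIntegrable (fun s : ℝ => (t - s) ^ (β - 1)) volume 0 t := by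
      have := (intervalIntegral.intervalIntegrable_rpow'
        (a := 0) (b := t) (by linarith : (-1:ℝ) < β - 1)).comp_sub_left t
      simpa using this.symm
    apply h1.mul_continuousOn
    apply ContinuousOn.div_const
    apply ContinuousOn.mul continuousOn_const
    exact continuousOn_id.rpow_const fun x _ => Or.inr (by positivity)
  -- value of each integral
  have hFval : ∀ k : ℕ, ∫ s in Set.Ioc (0:ℝ) t, F k s =
      Real.Gamma β * (γ ^ k * t ^ (((k:ℝ) + 1) * β) / Real.Gamma (((k:ℝ) + 1) * β + 1)) := by
    intro k
    have hB := beta_real (a := (k:ℝ) * β + 1) (b := β) (by positivity) hβ ht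
    rw [← intervalIntegral.integral_of_le ht.le]
    have : ∀ s : ℝ, F k s = (γ ^ k / Real.Gamma ((k : ℝ) * β + 1)) *
        (s ^ (((k:ℝ) * β + 1) - 1) * (t - s) ^ (β - 1)) := by
      intro s; simp only [hFdef]; ring_nf
    simp_rw [this]
    rw [intervalIntegral.integral_const_mul, hB]
    have hΓk : Real.Gamma ((k:ℝ) * β + 1) ≠ 0 :=
      (Real.Gamma_pos_of_pos (by positivity)).ne'
    have he1 : (k:ℝ) * β + 1 + β - 1 = ((k:ℝ) + 1) * β := by ring
    have he2 : (k:ℝ) * β + 1 + β = ((k:ℝ) + 1) * β + 1 := by ring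
    rw [he1, he2]
    field_simp
  -- norms
  have hFnorm : ∀ k : ℕ, ∫ s in Set.Ioc (0:ℝ) t, ‖F k s‖ =
      Real.Gamma β * (γ ^ k * t ^ (((k:ℝ) + 1) * β) / Real.Gamma (((k:ℝ) + 1) * β + 1)) := by
    intro k
    rw [← hFval k]
    refine setIntegral_congr_fun measurableSet_Ioc fun s hs => ?_
    rw [Real.norm_eq_abs, abs_of_nonneg]
    have h1 : (0:ℝ) ≤ t - s := by linarith [hs.2]
    have h2 : (0:ℝ) < s := hs.1
    positivity
  -- summability of the integrals of norms
  have hsum0 : Summable (fun k : ℕ => (γ * t ^ β) ^ k / Real.Gamma ((k : ℝ) * β + 1)) :=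
    summable_ML hβ hβ1 (by positivity)
  have hterm : ∀ k : ℕ, (γ * t ^ β) ^ k = γ ^ k * t ^ ((k:ℝ) * β) := by
    intro k
    rw [mul_pow, ← Real.rpow_natCast (t ^ β) k, ← Real.rpow_mul ht.le, mul_comm β]
  have hsum1 : Summable (fun k : ℕ =>
      Real.Gamma β * (γ ^ k * t ^ (((k:ℝ) + 1) * β) / Real.Gamma (((k:ℝ) + 1) * β + 1))) := by
    have h2 : Summable (fun k : ℕ =>
        (γ * t ^ β) ^ (k+1) / Real.Gamma (((k:ℝ)+1) * β + 1)) := by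
      have := (summable_nat_add_iff 1).2 hsum0
      refine this.congr fun k => ?_
      push_cast
      ring_nf
    refine ((h2.mul_left (Real.Gamma β / γ)).congr fun k => ?_)
    rw [hterm (k+1)]
    push_cast
    field_simp
    ring
  -- swap sum and integral
  have hswap : ∑' k : ℕ, ∫ s in Set.Ioc (0:ℝ) t, F k s =
      ∫ s in Set.Ioc (0:ℝ) t, ∑' k : ℕ, F k s := by
    refine MeasureTheory.integral_tsum_of_summable_integral_norm hFint ?_
    refine hsum1.congr fun k => (hFnorm k).symm
  -- identify the integrand
  have hintegrand : ∀ s ∈ Set.Ioc (0:ℝ) t,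
      (t - s) ^ (2 * α - 2) * mittagLeffler β (γ * s ^ β) = ∑' k : ℕ, F k s := by
    intro s hs
    rw [h2a2, mittagLeffler, ← tsum_mul_left]
    refine tsum_congr fun k => ?_
    simp only [hFdef]
    rw [mul_pow, ← Real.rpow_natCast (s ^ β) k, ← Real.rpow_mul hs.1.le, mul_comm β]
  -- put together
  rw [intervalIntegral.integral_of_le ht.le]
  rw [setIntegral_congr_fun measurableSet_Ioc hintegrand]
  rw [← hswap]
  simp_rw [hFval]
  rw [← tsum_mul_left]
  -- RHS
  have hML : mittagLeffler β (γ * t ^ β) - 1 =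
      ∑' k : ℕ, (γ * t ^ β) ^ (k+1) / Real.Gamma (((k:ℝ)+1) * β + 1) := by
    rw [mittagLeffler, Summable.tsum_eq_zero_add hsum0]
    push_cast
    simp [Real.Gamma_one]
  rw [hML]
  refine tsum_congr fun k => ?_
  rw [hterm (k+1)]
  have hΓ1 : Real.Gamma (((k:ℝ)+1) * β + 1) ≠ 0 :=
    (Real.Gamma_pos_of_pos (by positivity)).ne'
  push_cast
  field_simp
  ring
end

section
/- Let h > 0, 1/2 < α < 1, let A, B be real n×n matrices with AB = BA, let C be a real n×m matrix, and let v ∈ ℝⁿ. If Cᵀ (Bᵀ)^i (Aᵀ)^j v = 0 for all indices 0 ≤ i ≤ n−1 and 0 ≤ j ≤ n−1 (where Mᵀ denotes matrix transpose), then Cᵀ 𝓔^{Aᵀ,Bᵀ}_{h,α,α}(t) v = 0 for every t ∈ ℝ. -/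
open scoped Matrix.Norms.L2Operator Matrix

/-- The three-parameter matrix Mittag-Leffler function
`E^δ_{α,β}(A s^α) = Σ_{k=0}^∞ ((δ)_k / (Γ(kα + β) · k!)) · A^k · s^{kα}`. -/
noncomputable def matrixMittagLeffler {n : ℕ} (α β δ : ℝ)
    (A : Matrix (Fin n) (Fin n) ℝ) (s : ℝ) : Matrix (Fin n) (Fin n) ℝ :=
  ∑' k : ℕ,
    ((ascPochhammer ℝ k).eval δ / (Real.Gamma ((k : ℝ) * α + β) * (k.factorial : ℝ)) *
        s ^ ((k : ℝ) * α)) • A ^ k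

/-- The delayed perturbation of the three-parameter Mittag-Leffler type matrix function
`𝓔^{A,B}_{h,α,β}`: it vanishes for `t ≤ −h`, and for `(m−1)h < t ≤ mh` (with `m ≥ 0`,
i.e. `m = ⌈t/h⌉`) it equals
`Σ_{k=0}^{m} (t − (k−1)h)^{kα+β−1} · B^k · E^{k+1}_{α,kα+β}(A (t − (k−1)h)^α)`. -/
noncomputable def delayedMLPert {n : ℕ} (h α β : ℝ)
    (A B : Matrix (Fin n) (Fin n) ℝ) (t : ℝ) : Matrix (Fin n) (Fin n) ℝ :=
  if t ≤ -h then 0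
  else
    ∑ k ∈ Finset.range (⌈t / h⌉.toNat + 1),
      ((t - ((k : ℝ) - 1) * h) ^ ((k : ℝ) * α + β - 1)) •
        (B ^ k * matrixMittagLeffler α ((k : ℝ) * α + β) ((k : ℝ) + 1) A
          (t - ((k : ℝ) - 1) * h))

/-- Every power of a matrix lies in the span of the powers below `n`. -/
lemma pow_mem_span_pow_lt {n : ℕ} (M : Matrix (Fin n) (Fin n) ℝ) :
    ∀ k : ℕ, M ^ k ∈ Submodule.span ℝ {N | ∃ p < n, N = M ^ p} := by
  intro k
  induction k using Nat.strong_induction_on with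
  | _ k ih =>
    rcases lt_or_ge k n with hk | hk
    · exact Submodule.subset_span ⟨k, hk, rfl⟩
    · have hCH := Matrix.aeval_self_charpoly M
      have hdeg : M.charpoly.natDegree = n := by
        simpa using M.charpoly_natDegree_eq_dim
      have hsum := Polynomial.aeval_eq_sum_range (p := M.charpoly) M
      rw [hCH, hdeg, Finset.sum_range_succ] at hsum
      have hlead : M.charpoly.coeff n = 1 := by
        have := M.charpoly_monic
        rw [Polynomial.Monic, Polynomial.leadingCoeff, hdeg] at this
        exact this
      rw [hlead, one_smul] at hsum
      have hMn : M ^ n = -∑ i ∈ Finset.range n, M.charpoly.coeff i • M ^ i := by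
        linear_combination (norm := module) hsum.symm
      have hkey : M ^ k = -∑ i ∈ Finset.range n, M.charpoly.coeff i • M ^ (k - n + i) := by
        have : M ^ k = M ^ (k - n) * M ^ n := by
          rw [← pow_add]; congr 1; omega
        rw [this, hMn, mul_neg, Finset.mul_sum]
        congr 1
        refine Finset.sum_congr rfl fun i _ => ?_
        rw [mul_smul_comm, ← pow_add]
      rw [hkey]
      refine Submodule.neg_mem _ (Submodule.sum_mem _ fun i hi => Submodule.smul_mem _ _ ?_)
      have : k - n + i < k := by
        simp only [Finset.mem_range] at hi; omega
      exact ih _ this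

/-- The linear map `M ↦ Cᵀ *ᵥ ((X * M * Y) *ᵥ v)`. -/
noncomputable def sandwichMap {n m : ℕ} (C : Matrix (Fin n) (Fin m) ℝ)
    (X Y : Matrix (Fin n) (Fin n) ℝ) (v : Fin n → ℝ) :
    Matrix (Fin n) (Fin n) ℝ →ₗ[ℝ] (Fin m → ℝ) where
  toFun M := Cᵀ *ᵥ ((X * M * Y) *ᵥ v)
  map_add' M N := by
    simp [Matrix.mul_add, Matrix.add_mul, Matrix.add_mulVec, Matrix.mulVec_add]
  map_smul' c M := by
    simp [Matrix.mul_smul, Matrix.smul_mul, Matrix.smul_mulVec, Matrix.mulVec_smul]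

lemma key_vanish {n m : ℕ} (A B : Matrix (Fin n) (Fin n) ℝ)
    (C : Matrix (Fin n) (Fin m) ℝ) (v : Fin n → ℝ)
    (hv : ∀ i j : ℕ, i ≤ n - 1 → j ≤ n - 1 → Cᵀ *ᵥ ((Bᵀ ^ i * Aᵀ ^ j) *ᵥ v) = 0) :
    ∀ i j : ℕ, Cᵀ *ᵥ ((Bᵀ ^ i * Aᵀ ^ j) *ᵥ v) = 0 := by
  rcases Nat.eq_zero_or_pos n with hn | hn
  · subst hn
    intro i j
    funext x
    simp [Matrix.mulVec, dotProduct]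
  have stepA : ∀ p < n, ∀ j : ℕ, Cᵀ *ᵥ ((Bᵀ ^ p * Aᵀ ^ j) *ᵥ v) = 0 := by
    intro p hp j
    have hspan := pow_mem_span_pow_lt Aᵀ j
    have hle : Submodule.span ℝ {N | ∃ q < n, N = Aᵀ ^ q} ≤
        LinearMap.ker (sandwichMap C (Bᵀ ^ p) 1 v) := by
      rw [Submodule.span_le]
      rintro _ ⟨q, hq, rfl⟩
      simp only [SetLike.mem_coe, LinearMap.mem_ker, sandwichMap, LinearMap.coe_mk,
        AddHom.coe_mk, Matrix.mul_one]
      exact hv p q (by omega) (by omega)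
    have := hle hspan
    simp only [SetLike.mem_coe, LinearMap.mem_ker, sandwichMap, LinearMap.coe_mk,
      AddHom.coe_mk, Matrix.mul_one] at this
    exact this
  intro i j
  have hspan := pow_mem_span_pow_lt Bᵀ i
  have hle : Submodule.span ℝ {N | ∃ p < n, N = Bᵀ ^ p} ≤
      LinearMap.ker (sandwichMap C 1 (Aᵀ ^ j) v) := by
    rw [Submodule.span_le]
    rintro _ ⟨p, hp, rfl⟩
    simp only [SetLike.mem_coe, LinearMap.mem_ker, sandwichMap, LinearMap.coe_mk,
      AddHom.coe_mk, Matrix.one_mul]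
    exact stepA p hp j
  have := hle hspan
  simp only [SetLike.mem_coe, LinearMap.mem_ker, sandwichMap, LinearMap.coe_mk,
    AddHom.coe_mk, Matrix.one_mul] at this
  exact this

/-- part of the proof of the Kalman rank condition, Theorem 5.4: if
`Cᵀ (Bᵀ)^i (Aᵀ)^j v = 0` for all `0 ≤ i, j ≤ n−1`, then
`Cᵀ 𝓔^{Aᵀ,Bᵀ}_{h,α,α}(t) v = 0` for every real `t`. -/
theorem kalman_vanishing_of_rank_relations {n m : ℕ} (h α : ℝ) (hh : 0 < h)
    (hα : 1 / 2 < α) (hα' : α < 1)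
    (A B : Matrix (Fin n) (Fin n) ℝ) (hAB : A * B = B * A)
    (C : Matrix (Fin n) (Fin m) ℝ) (v : Fin n → ℝ)
    (hv : ∀ i j : ℕ, i ≤ n - 1 → j ≤ n - 1 → Cᵀ *ᵥ ((Bᵀ ^ i * Aᵀ ^ j) *ᵥ v) = 0) :
    ∀ t : ℝ, Cᵀ *ᵥ (delayedMLPert h α α Aᵀ Bᵀ t *ᵥ v) = 0 := by
  have key := key_vanish A B C v hv
  intro t
  unfold delayedMLPert
  split_ifs with ht
  · simp
  · have hL0 : ∀ M : Matrix (Fin n) (Fin n) ℝ, Cᵀ *ᵥ (M *ᵥ v) = sandwichMap C 1 1 v M := by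
      intro M; simp [sandwichMap]
    rw [hL0, map_sum]
    refine Finset.sum_eq_zero fun k _ => ?_
    rw [map_smul]
    set s := t - ((k : ℝ) - 1) * h
    set L := (sandwichMap C (Bᵀ ^ k) 1 v).toContinuousLinearMap with hL
    have hLval : ∀ M, L M = Cᵀ *ᵥ ((Bᵀ ^ k * M) *ᵥ v) := by
      intro M
      simp [hL, LinearMap.toContinuousLinearMap, sandwichMap, Matrix.mul_one]
    have hrw : sandwichMap C 1 1 v (Bᵀ ^ k * matrixMittagLeffler α ((k : ℝ) * α + α) ((k : ℝ) + 1) Aᵀ s)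
        = L (matrixMittagLeffler α ((k : ℝ) * α + α) ((k : ℝ) + 1) Aᵀ s) := by
      rw [hLval]; simp [sandwichMap]
    rw [hrw]
    unfold matrixMittagLeffler
    have hterm : ∀ j : ℕ, L
        (((ascPochhammer ℝ j).eval ((k : ℝ) + 1) /
            (Real.Gamma ((j : ℝ) * α + ((k : ℝ) * α + α)) * (j.factorial : ℝ)) *
            s ^ ((j : ℝ) * α)) • Aᵀ ^ j) = 0 := by
      intro j
      rw [map_smul, hLval, key k j, smul_zero]
    by_cases hs : Summable fun j : ℕ =>
      ((ascPochhammer ℝ j).eval ((k : ℝ) + 1) /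
          (Real.Gamma ((j : ℝ) * α + ((k : ℝ) * α + α)) * (j.factorial : ℝ)) *
          s ^ ((j : ℝ) * α)) • Aᵀ ^ j
    · rw [L.map_tsum hs]
      simp only [hterm, tsum_zero, smul_zero]
    · rw [tsum_eq_zero_of_not_summable hs, map_zero, smul_zero]
end

section
/- Let h > 0, 0 < α < 1, and let A, B be real n×n matrices. Then the delayed Mittag-Leffler type matrix function t ↦ 𝓔^{A,B}_{h,α}(t) is continuous on the interval [−h, ∞) (with respect to the operator-norm topology on real n×n matrices); in particular, at every node t = mh with m a natural number, the piecewise formulas agree. -/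
open scoped Matrix.Norms.L2Operator

/-- The delayed Mittag-Leffler type matrix function `𝓔^{A,B}_{h,α}`: it vanishes for
`t < −h`, equals the identity for `−h ≤ t ≤ 0`, and for `(m−1)h < t ≤ mh` with `m ≥ 1`
(i.e. `m = ⌈t/h⌉`) it equals
`I + Σ_{k=0}^{m−1} (t − kh)^{(k+1)α} · E^{k+1}_{α,(k+1)α+1}(A(t − kh)^α) · B^k (A + B)`. -/
noncomputable def delayedML {n : ℕ} (h α : ℝ)
    (A B : Matrix (Fin n) (Fin n) ℝ) (t : ℝ) : Matrix (Fin n) (Fin n) ℝ :=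
  if t < -h then 0
  else if t ≤ 0 then 1
  else
    1 + ∑ k ∈ Finset.range (⌈t / h⌉.toNat),
      ((t - (k : ℝ) * h) ^ (((k : ℝ) + 1) * α)) •
        (matrixMittagLeffler α (((k : ℝ) + 1) * α + 1) ((k : ℝ) + 1) A (t - (k : ℝ) * h) *
          (B ^ k * (A + B)))

section Aux

open Real Filter Set Topology

/-- Geometric-type bound on the reciprocal Gamma function along arithmetic progressions. -/
lemma exists_gamma_bound (α β c : ℝ) (hα : 0 < α) (hβ : 1 ≤ β) (hc : 0 < c) :
    ∃ D : ℝ, 0 < D ∧ ∀ m : ℕ, 1 / Real.Gamma ((m:ℝ) * α + β) ≤ D * c ^ m := by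
  have hargpos : ∀ m : ℕ, 0 < (m:ℝ)*α + β := fun m =>
    add_pos_of_nonneg_of_pos (by positivity) (by linarith)
  set M₀ : ℝ := max 1 (1/c) with hM
  have hM1 : 1 ≤ M₀ := le_max_left _ _
  set N : ℕ := ⌈1/α⌉₊ with hN
  set C : ℝ := M₀ ^ N with hC
  have hC0 : 0 < C := by positivity
  set K : ℕ → ℕ := fun m => ⌊(m:ℝ)*α + β⌋₊ - 1 with hK
  have key : Tendsto (fun m : ℕ => (1/c)^m / Real.Gamma ((m:ℝ)*α + β)) atTop (𝓝 0) := by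
    have hKtop : Tendsto K atTop atTop := by
      rw [tendsto_atTop_atTop]
      intro b
      refine ⟨⌈((b:ℝ)+2)/α⌉₊, fun m hm => ?_⟩
      have h1 : ((b:ℝ)+2)/α ≤ m := le_trans (Nat.le_ceil _) (Nat.cast_le.mpr hm)
      have h2 : (b:ℝ) + 2 ≤ m*α := (div_le_iff₀ hα).mp h1
      have h4 : b + 2 ≤ ⌊(m:ℝ)*α+β⌋₊ := Nat.le_floor (by push_cast; linarith)
      simp only [hK]; omega
    have hg : Tendsto (fun j : ℕ => C * (C ^ j / (j.factorial : ℝ))) atTop (𝓝 0) := by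
      have h := (Real.summable_pow_div_factorial C).tendsto_atTop_zero
      simpa using h.const_mul C
    refine squeeze_zero' ?_ ?_ (hg.comp hKtop)
    · filter_upwards with m
      exact div_nonneg (by positivity) (Real.Gamma_pos_of_pos (hargpos m)).le
    · have hev : ∀ᶠ m : ℕ in atTop, 2 ≤ (m:ℝ)*α + β := by
        filter_upwards [eventually_ge_atTop ⌈2/α⌉₊] with m hm
        have h1 : (2:ℝ)/α ≤ m := le_trans (Nat.le_ceil _) (Nat.cast_le.mpr hm)
        have h2 : (2:ℝ) ≤ m*α := (div_le_iff₀ hα).mp h1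
        linarith
      filter_upwards [hev] with m h2
      have hF2 : 2 ≤ ⌊(m:ℝ)*α + β⌋₊ := Nat.le_floor (by exact_mod_cast h2)
      have hKm : K m + 1 = ⌊(m:ℝ)*α + β⌋₊ := by simp only [hK]; omega
      have hcast : ((K m : ℝ) + 1) = (⌊(m:ℝ)*α + β⌋₊ : ℝ) := by exact_mod_cast hKm
      have hfl : ((⌊(m:ℝ)*α + β⌋₊ : ℝ)) ≤ (m:ℝ)*α + β := Nat.floor_le (hargpos m).le
      have hfact : ((K m).factorial : ℝ) ≤ Real.Gamma ((m:ℝ)*α + β) := by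
        have h1 : Real.Gamma ((K m : ℝ) + 1) = (K m).factorial := Real.Gamma_nat_eq_factorial _
        rw [← h1]
        refine Real.Gamma_strictMonoOn_Ici.monotoneOn ?_ ?_ ?_
        · rw [Set.mem_Ici, hcast]; exact_mod_cast hF2
        · exact h2
        · rw [hcast]; exact hfl
      have hm1 : (m:ℝ)*α ≤ (⌊(m:ℝ)*α + β⌋₊ : ℝ) := by
        have := Nat.sub_one_lt_floor ((m:ℝ)*α + β)
        linarith
      have hmN : m ≤ N*(K m + 1) := by
        have h1α : (1:ℝ)/α ≤ N := Nat.le_ceil _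
        have hm2 : (m:ℝ) ≤ (⌊(m:ℝ)*α + β⌋₊:ℝ)/α := by rw [le_div_iff₀ hα]; exact hm1
        have hm3 : (⌊(m:ℝ)*α + β⌋₊:ℝ)/α ≤ (⌊(m:ℝ)*α + β⌋₊:ℝ)*N := by
          rw [div_eq_mul_one_div]
          exact mul_le_mul_of_nonneg_left h1α (Nat.cast_nonneg _)
        have hm4 : m ≤ ⌊(m:ℝ)*α + β⌋₊ * N := by exact_mod_cast le_trans hm2 hm3
        rw [hKm, Nat.mul_comm]; exact hm4
      have hpow : (1/c)^m ≤ C^(K m + 1) :=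
        calc (1/c)^m ≤ M₀^m := pow_le_pow_left₀ (by positivity) (le_max_right _ _) m
          _ ≤ M₀^(N*(K m + 1)) := pow_le_pow_right₀ hM1 hmN
          _ = C^(K m + 1) := by rw [hC, ← pow_mul]
      calc (1/c)^m / Real.Gamma ((m:ℝ)*α + β) ≤ C^(K m + 1) / ((K m).factorial : ℝ) := by
            apply div_le_div₀ (by positivity) hpow (by positivity) hfact
        _ = C * (C^(K m)/((K m).factorial : ℝ)) := by rw [pow_succ]; ring
  obtain ⟨D0, hD0⟩ := key.bddAbove_range
  refine ⟨max D0 1, lt_of_lt_of_le zero_lt_one (le_max_right _ _), fun m => ?_⟩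
  have h1 : (1/c)^m / Real.Gamma ((m:ℝ)*α + β) ≤ D0 := hD0 ⟨m, rfl⟩
  have hΓ : 0 < Real.Gamma ((m:ℝ)*α+β) := Real.Gamma_pos_of_pos (hargpos m)
  have heq : 1 / Real.Gamma ((m:ℝ)*α+β)
      = ((1/c)^m / Real.Gamma ((m:ℝ)*α+β)) * c^m := by
    field_simp
    rw [← mul_pow, one_div_mul_cancel hc.ne', one_pow]
  rw [heq]
  calc ((1/c)^m / Real.Gamma ((m:ℝ)*α+β)) * c^m ≤ D0 * c^m :=
        mul_le_mul_of_nonneg_right h1 (by positivity)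
    _ ≤ max D0 1 * c^m := mul_le_mul_of_nonneg_right (le_max_left _ _) (by positivity)

lemma matrix_norm_one_le {n : ℕ} : ‖(1 : Matrix (Fin n) (Fin n) ℝ)‖ ≤ 1 := by
  rw [Matrix.cstar_norm_def, map_one, ContinuousLinearMap.one_def]
  exact ContinuousLinearMap.norm_id_le

lemma matrix_norm_pow_le {n : ℕ} (A : Matrix (Fin n) (Fin n) ℝ) (j : ℕ) :
    ‖A ^ j‖ ≤ ‖A‖ ^ j := by
  induction j with
  | zero => simpa using matrix_norm_one_le
  | succ j ih =>
      calc ‖A ^ (j+1)‖ = ‖A ^ j * A‖ := by rw [pow_succ]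
        _ ≤ ‖A ^ j‖ * ‖A‖ := norm_mul_le _ _
        _ ≤ ‖A‖ ^ j * ‖A‖ := mul_le_mul_of_nonneg_right ih (norm_nonneg _)
        _ = ‖A‖ ^ (j+1) := by rw [pow_succ]

lemma matrix_norm_pow_mul_le {n : ℕ} (B C : Matrix (Fin n) (Fin n) ℝ) (k : ℕ) :
    ‖B ^ k * C‖ ≤ ‖B‖ ^ k * ‖C‖ :=
  calc ‖B ^ k * C‖ ≤ ‖B ^ k‖ * ‖C‖ := norm_mul_le _ _
    _ ≤ ‖B‖ ^ k * ‖C‖ := mul_le_mul_of_nonneg_right (matrix_norm_pow_le B k) (norm_nonneg _)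

lemma rpow_le_nat_pow (s R : ℝ) (hs : 0 ≤ s) (hsR : s ≤ R) (hR : 1 ≤ R) (e : ℝ) (j : ℕ)
    (he : 0 ≤ e) (hej : e ≤ j) : s ^ e ≤ R ^ j :=
  calc s ^ e ≤ R ^ e := Real.rpow_le_rpow hs hsR he
    _ ≤ R ^ (j:ℝ) := Real.rpow_le_rpow_of_exponent_le hR hej
    _ = R ^ j := Real.rpow_natCast R j

lemma choose_le_two_pow' (n k : ℕ) : n.choose k ≤ 2 ^ n := by
  rcases le_or_gt k n with h | h
  · calc n.choose k ≤ ∑ m ∈ Finset.range (n+1), n.choose m :=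
        Finset.single_le_sum (fun i _ => Nat.zero_le _) (Finset.mem_range.mpr (Nat.lt_succ_of_le h))
    _ = 2 ^ n := Nat.sum_range_choose n
  · rw [Nat.choose_eq_zero_of_lt h]; exact Nat.zero_le _

lemma ml_term_bound {n : ℕ} (α : ℝ) (hα : 0 < α) (hα1 : α < 1) (A : Matrix (Fin n) (Fin n) ℝ)
    (R' D ρ : ℝ) (hR' : 1 ≤ R') (hD : 0 < D) (hρ : 0 < ρ)
    (hDle : ∀ m : ℕ, 1 / Real.Gamma ((m:ℝ) * α + (α+1)) ≤ D * ρ^m)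
    (k j : ℕ) (s : ℝ) (hs : s ∈ Set.Icc 0 R') :
    ‖((ascPochhammer ℝ j).eval ((k:ℝ)+1) /
        (Real.Gamma ((j:ℝ)*α + (((k:ℝ)+1)*α+1)) * (j.factorial:ℝ)) * s ^ ((j:ℝ)*α)) • A ^ j‖
      ≤ (D * (2*ρ)^k) * (2*ρ*R'*‖A‖)^j := by
  obtain ⟨hs0, hsR⟩ := hs
  have hargeq : (j:ℝ)*α + (((k:ℝ)+1)*α+1) = ((j+k : ℕ):ℝ)*α + (α+1) := by push_cast; ring
  have hΓpos : 0 < Real.Gamma ((j:ℝ)*α + (((k:ℝ)+1)*α+1)) := by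
    rw [hargeq]
    exact Real.Gamma_pos_of_pos (by positivity)
  have hpoch : (ascPochhammer ℝ j).eval ((k:ℝ)+1) = ((k+1).ascFactorial j : ℕ) := by
    have := Nat.cast_ascFactorial (S := ℝ) (k+1) j
    rw [this]; push_cast; ring_nf
  have hchoose : ((k+1).ascFactorial j : ℝ) = (j.factorial : ℝ) * ((k+j).choose j : ℝ) := by
    exact_mod_cast congrArg (Nat.cast (R := ℝ)) (Nat.ascFactorial_eq_factorial_mul_choose k j)
  have hcoef : (ascPochhammer ℝ j).eval ((k:ℝ)+1) /
      (Real.Gamma ((j:ℝ)*α + (((k:ℝ)+1)*α+1)) * (j.factorial:ℝ))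
      = ((k+j).choose j : ℝ) * (1 / Real.Gamma ((j:ℝ)*α + (((k:ℝ)+1)*α+1))) := by
    rw [hpoch, hchoose]
    have hj : ((j.factorial : ℝ)) ≠ 0 := by positivity
    field_simp
  rw [norm_smul, Real.norm_eq_abs, hcoef]
  have h1 : 0 ≤ ((k+j).choose j : ℝ) * (1 / Real.Gamma ((j:ℝ)*α + (((k:ℝ)+1)*α+1))) := by
    positivity
  have hsp : (0:ℝ) ≤ s ^ ((j:ℝ)*α) := Real.rpow_nonneg hs0 _
  rw [abs_of_nonneg (mul_nonneg h1 hsp)]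
  have hG : 1 / Real.Gamma ((j:ℝ)*α + (((k:ℝ)+1)*α+1)) ≤ D * ρ^(j+k) := by
    rw [hargeq]; exact hDle (j+k)
  have hch2 : ((k+j).choose j : ℝ) ≤ (2:ℝ)^(k+j) := by
    exact_mod_cast choose_le_two_pow' (k+j) j
  have hjα : (j:ℝ)*α ≤ (j:ℝ) := by nlinarith [(Nat.cast_nonneg j : (0:ℝ) ≤ j)]
  have hsle : s ^ ((j:ℝ)*α) ≤ R' ^ j :=
    rpow_le_nat_pow s R' hs0 hsR hR' _ j (by positivity) hjα
  have hA : ‖A ^ j‖ ≤ ‖A‖ ^ j := matrix_norm_pow_le A j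
  have hR0 : (0:ℝ) ≤ R' := le_trans zero_le_one hR'
  calc ((k+j).choose j : ℝ) * (1 / Real.Gamma ((j:ℝ)*α + (((k:ℝ)+1)*α+1))) * s ^ ((j:ℝ)*α) * ‖A^j‖
      ≤ (2:ℝ)^(k+j) * (D * ρ^(j+k)) * R'^j * ‖A‖^j := by
        apply mul_le_mul (mul_le_mul (mul_le_mul hch2 hG ?_ ?_) hsle hsp ?_) hA (norm_nonneg _) ?_
        all_goals positivity
    _ = (D * (2*ρ)^k) * (2*ρ*R'*‖A‖)^j := by
        rw [pow_add, pow_add, mul_pow, mul_pow, mul_pow, mul_pow]; ring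

lemma ml_continuousOn_and_bound {n : ℕ} (α : ℝ) (hα : 0 < α) (hα1 : α < 1)
    (A : Matrix (Fin n) (Fin n) ℝ) (R' D ρ : ℝ) (hR' : 1 ≤ R') (hD : 0 < D) (hρ : 0 < ρ)
    (hDle : ∀ m : ℕ, 1 / Real.Gamma ((m:ℝ) * α + (α+1)) ≤ D * ρ^m)
    (hq1 : 2*ρ*R'*‖A‖ ≤ 1/2) (k : ℕ) :
    ContinuousOn (fun s => matrixMittagLeffler α (((k:ℝ)+1)*α+1) ((k:ℝ)+1) A s) (Set.Icc 0 R') ∧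
    ∀ s ∈ Set.Icc 0 R',
      ‖matrixMittagLeffler α (((k:ℝ)+1)*α+1) ((k:ℝ)+1) A s‖ ≤ 2 * (D * (2*ρ)^k) := by
  have hq0 : 0 ≤ 2*ρ*R'*‖A‖ := by positivity
  have hq1' : 2*ρ*R'*‖A‖ < 1 := lt_of_le_of_lt hq1 (by norm_num)
  set v : ℕ → ℝ := fun j => (D * (2*ρ)^k) * (2*ρ*R'*‖A‖)^j with hv
  have hsv : Summable v := (summable_geometric_of_lt_one hq0 hq1').mul_left _
  have htv2 : ∑' j, v j ≤ 2 * (D * (2*ρ)^k) := by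
    have hinv : (1 - 2*ρ*R'*‖A‖)⁻¹ ≤ 2 := by
      rw [inv_le_comm₀ (by linarith) (by norm_num)]
      linarith
    have e1 : ∑' j, v j = (D * (2*ρ)^k) * (1 - 2*ρ*R'*‖A‖)⁻¹ := by
      simp only [hv]
      rw [tsum_mul_left, tsum_geometric_of_lt_one hq0 hq1']
    rw [e1]
    calc (D * (2*ρ)^k) * (1 - 2*ρ*R'*‖A‖)⁻¹ ≤ (D * (2*ρ)^k) * 2 :=
          mul_le_mul_of_nonneg_left hinv (by positivity)
      _ = 2 * (D * (2*ρ)^k) := mul_comm _ _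
  constructor
  · rw [continuousOn_iff_continuous_restrict]
    show Continuous fun x : Set.Icc (0:ℝ) R' => matrixMittagLeffler α (((k:ℝ)+1)*α+1) ((k:ℝ)+1) A ↑x
    simp only [matrixMittagLeffler]
    apply continuous_tsum (u := v) ?_ hsv ?_
    · intro j
      refine Continuous.smul (M := ℝ) (g := fun _ : Set.Icc (0:ℝ) R' => A ^ j) ?_ continuous_const
      exact continuous_const.mul
        ((Real.continuous_rpow_const (by positivity)).comp continuous_subtype_val)
    · intro j x
      exact ml_term_bound α hα hα1 A R' D ρ hR' hD hρ hDle k j (↑x) x.2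
  · intro s hs
    have hterm : ∀ j : ℕ, ‖((ascPochhammer ℝ j).eval ((k:ℝ)+1) /
        (Real.Gamma ((j:ℝ)*α + (((k:ℝ)+1)*α+1)) * (j.factorial:ℝ)) * s ^ ((j:ℝ)*α)) • A ^ j‖
        ≤ v j := fun j => ml_term_bound α hα hα1 A R' D ρ hR' hD hρ hDle k j s hs
    have hsn : Summable (fun j : ℕ => ‖((ascPochhammer ℝ j).eval ((k:ℝ)+1) /
        (Real.Gamma ((j:ℝ)*α + (((k:ℝ)+1)*α+1)) * (j.factorial:ℝ)) * s ^ ((j:ℝ)*α)) • A ^ j‖) :=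
      Summable.of_nonneg_of_le (fun j => norm_nonneg _) hterm hsv
    calc ‖matrixMittagLeffler α (((k:ℝ)+1)*α+1) ((k:ℝ)+1) A s‖
        ≤ ∑' j, ‖((ascPochhammer ℝ j).eval ((k:ℝ)+1) /
            (Real.Gamma ((j:ℝ)*α + (((k:ℝ)+1)*α+1)) * (j.factorial:ℝ)) * s ^ ((j:ℝ)*α)) • A ^ j‖ :=
          norm_tsum_le_tsum_norm hsn
      _ ≤ ∑' j, v j := Summable.tsum_le_tsum hterm hsn hsv
      _ ≤ 2 * (D * (2*ρ)^k) := htv2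

/-- The `k`-th summand of the delayed Mittag-Leffler function, extended by `0`. -/
noncomputable def mlPhi {n : ℕ} (h α : ℝ) (A B : Matrix (Fin n) (Fin n) ℝ) (k : ℕ) (t : ℝ) :
    Matrix (Fin n) (Fin n) ℝ :=
  (max (t - (k:ℝ)*h) 0) ^ (((k:ℝ)+1)*α) •
    (matrixMittagLeffler α (((k:ℝ)+1)*α+1) ((k:ℝ)+1) A (max (t - (k:ℝ)*h) 0) * (B^k * (A+B)))

lemma mlPhi_eq_zero {n : ℕ} (h α : ℝ) (hα : 0 < α) (A B : Matrix (Fin n) (Fin n) ℝ) (k : ℕ)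
    (t : ℝ) (ht : t ≤ (k:ℝ)*h) : mlPhi h α A B k t = 0 := by
  unfold mlPhi
  rw [max_eq_right (sub_nonpos.mpr ht), Real.zero_rpow (by positivity), zero_smul]

end Aux

section Main

open Real Filter Set Topology

/-- the delayed Mittag-Leffler type matrix function `t ↦ 𝓔^{A,B}_{h,α}(t)`
is continuous on `[−h, ∞)` with respect to the operator-norm topology on real `n×n`
matrices; in particular the piecewise formulas agree at every node `t = mh`. -/
theorem delayedML_continuousOn {n : ℕ} (h α : ℝ) (hh : 0 < h)
    (hα : 0 < α) (hα' : α < 1) (A B : Matrix (Fin n) (Fin n) ℝ) :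
    ContinuousOn (delayedML h α A B) (Set.Ici (-h)) := by
  -- Continuity of the globally-defined series on every `Icc (-h) R`
  have hGR : ∀ R : ℝ, ContinuousOn (fun t => 1 + ∑' k, mlPhi h α A B k t) (Set.Icc (-h) R) := by
    intro R
    set R' : ℝ := max R 1 with hR'def
    have hR'1 : 1 ≤ R' := le_max_right _ _
    have hRR' : R ≤ R' := le_max_left _ _
    have hR'0 : 0 < R' := lt_of_lt_of_le zero_lt_one hR'1
    set ρ : ℝ := (4*R'*(‖A‖+‖B‖+2))⁻¹ with hρdef
    have hρ : 0 < ρ := by positivity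
    have hq1 : 2*ρ*R'*‖A‖ ≤ 1/2 := by
      rw [hρdef, show 2*(4*R'*(‖A‖+‖B‖+2))⁻¹*R'*‖A‖ = (2*R'*‖A‖) / (4*R'*(‖A‖+‖B‖+2)) by ring]
      rw [div_le_iff₀ (by positivity)]
      nlinarith [norm_nonneg A, norm_nonneg B, hR'0]
    have hq2 : 2*ρ*R'*‖B‖ ≤ 1/2 := by
      rw [hρdef, show 2*(4*R'*(‖A‖+‖B‖+2))⁻¹*R'*‖B‖ = (2*R'*‖B‖) / (4*R'*(‖A‖+‖B‖+2)) by ring]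
      rw [div_le_iff₀ (by positivity)]
      nlinarith [norm_nonneg A, norm_nonneg B, hR'0]
    obtain ⟨D, hD, hDle⟩ := exists_gamma_bound α (α+1) ρ hα (by linarith) hρ
    have hkey := fun k => ml_continuousOn_and_bound α hα hα' A R' D ρ hR'1 hD hρ hDle hq1 k
    have hmaps : ∀ k : ℕ, MapsTo (fun t : ℝ => max (t - (k:ℝ)*h) 0) (Icc (-h) R) (Icc 0 R') := by
      intro k t ht
      have hkh : (0:ℝ) ≤ (k:ℝ)*h := by positivity
      exact ⟨le_max_right _ _, max_le (by linarith [ht.2]) (by linarith)⟩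
    have hφcont : ∀ k, ContinuousOn (mlPhi h α A B k) (Icc (-h) R) := by
      intro k
      have hmax : Continuous fun t : ℝ => max (t - (k:ℝ)*h) 0 :=
        (continuous_id.sub continuous_const).max continuous_const
      have hsc : Continuous (fun t : ℝ => (max (t - (k:ℝ)*h) 0) ^ (((k:ℝ)+1)*α)) :=
        (Real.continuous_rpow_const (by positivity)).comp hmax
      have hml : ContinuousOn
          (fun t => matrixMittagLeffler α (((k:ℝ)+1)*α+1) ((k:ℝ)+1) A (max (t - (k:ℝ)*h) 0))
          (Icc (-h) R) :=
        (hkey k).1.comp hmax.continuousOn (hmaps k)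
      unfold mlPhi
      exact hsc.continuousOn.smul (hml.mul continuousOn_const)
    set u : ℕ → ℝ := fun k => (2*D*R'*‖A+B‖) * (2*ρ*R'*‖B‖)^k with hu
    have hus : Summable u :=
      (summable_geometric_of_lt_one (by positivity)
        (lt_of_le_of_lt hq2 (by norm_num))).mul_left _
    have hφb : ∀ (k : ℕ) (t : ℝ), t ∈ Icc (-h) R → ‖mlPhi h α A B k t‖ ≤ u k := by
      intro k t ht
      have hsmem := hmaps k ht
      have hb1 := (hkey k).2 _ hsmem
      unfold mlPhi
      rw [norm_smul, Real.norm_eq_abs, abs_of_nonneg (Real.rpow_nonneg (le_max_right _ _) _)]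
      have hscb : (max (t - (k:ℝ)*h) 0) ^ (((k:ℝ)+1)*α) ≤ R' ^ (k+1) :=
        rpow_le_nat_pow _ _ hsmem.1 hsmem.2 hR'1 _ (k+1) (by positivity)
          (by push_cast; nlinarith [(Nat.cast_nonneg k : (0:ℝ) ≤ k)])
      have hMC : ‖matrixMittagLeffler α (((k:ℝ)+1)*α+1) ((k:ℝ)+1) A (max (t - (k:ℝ)*h) 0)
            * (B^k * (A+B))‖ ≤ (2*(D*(2*ρ)^k)) * (‖B‖^k * ‖A+B‖) :=
        le_trans (norm_mul_le _ _)
          (mul_le_mul hb1 (matrix_norm_pow_mul_le B (A+B) k) (norm_nonneg _) (by positivity))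
      calc (max (t - (k:ℝ)*h) 0) ^ (((k:ℝ)+1)*α)
            * ‖matrixMittagLeffler α (((k:ℝ)+1)*α+1) ((k:ℝ)+1) A (max (t - (k:ℝ)*h) 0)
              * (B^k * (A+B))‖
          ≤ R'^(k+1) * ((2*(D*(2*ρ)^k)) * (‖B‖^k * ‖A+B‖)) :=
            mul_le_mul hscb hMC (norm_nonneg _) (by positivity)
        _ = u k := by simp only [hu]; ring
    have hcont : Continuous fun x : Icc (-h) R => ∑' k, mlPhi h α A B k ↑x :=
      continuous_tsum (fun k => continuousOn_iff_continuous_restrict.mp (hφcont k)) hus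
        (fun k x => hφb k ↑x x.2)
    have hsum : ContinuousOn (fun t => ∑' k, mlPhi h α A B k t) (Icc (-h) R) :=
      continuousOn_iff_continuous_restrict.mpr hcont
    exact continuousOn_const.add hsum
  have hGcont : ContinuousOn (fun t => 1 + ∑' k, mlPhi h α A B k t) (Set.Ici (-h)) := by
    intro t ht
    have h2 := (hGR (t+1)).continuousWithinAt
      (show t ∈ Icc (-h) (t+1) from ⟨ht, by linarith⟩)
    apply h2.mono_of_mem_nhdsWithin
    rw [← Set.Ici_inter_Iic]
    exact Filter.inter_mem self_mem_nhdsWithin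
      (mem_nhdsWithin_of_mem_nhds (Iic_mem_nhds (by linarith)))
  apply hGcont.congr
  intro t ht
  show delayedML h α A B t = 1 + ∑' k, mlPhi h α A B k t
  rw [Set.mem_Ici] at ht
  have hnlt : ¬ t < -h := not_lt.mpr ht
  unfold delayedML
  by_cases h0 : t ≤ 0
  · rw [if_neg hnlt, if_pos h0]
    have hz : ∀ k : ℕ, mlPhi h α A B k t = 0 := fun k =>
      mlPhi_eq_zero h α hα A B k t (le_trans h0 (by positivity))
    simp [hz, tsum_zero]
  · push_neg at h0
    rw [if_neg hnlt, if_neg (not_le.mpr h0)]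
    have hceil : ((⌈t/h⌉.toNat : ℕ) : ℝ) = ((⌈t/h⌉ : ℤ) : ℝ) := by
      have hc0 : (0:ℤ) ≤ ⌈t/h⌉ := Int.ceil_nonneg (le_of_lt (div_pos h0 hh))
      exact_mod_cast Int.toNat_of_nonneg hc0
    have hvan : ∀ k ∉ Finset.range (⌈t/h⌉.toNat), mlPhi h α A B k t = 0 := by
      intro k hk
      apply mlPhi_eq_zero h α hα A B k t
      have hk' : ⌈t/h⌉.toNat ≤ k := le_of_not_gt (fun hc => hk (Finset.mem_range.mpr hc))
      have h1 : t/h ≤ ((⌈t/h⌉ : ℤ) : ℝ) := Int.le_ceil _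
      have h2 : ((⌈t/h⌉.toNat : ℕ):ℝ) ≤ (k:ℝ) := Nat.cast_le.mpr hk'
      rw [hceil] at h2
      exact (div_le_iff₀ hh).mp (le_trans h1 h2)
    rw [tsum_eq_sum hvan]
    congr 1
    apply Finset.sum_congr rfl
    intro k hk
    have hkm : k < ⌈t/h⌉.toNat := Finset.mem_range.mp hk
    have h3 : ((k:ℝ)+1) ≤ ((⌈t/h⌉ : ℤ) : ℝ) := by
      have hkk : (k+1 : ℕ) ≤ ⌈t/h⌉.toNat := hkm
      have := Nat.cast_le (α := ℝ) |>.mpr hkk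
      rw [hceil] at this
      push_cast at this ⊢
      linarith
    have h4 : ((⌈t/h⌉ : ℤ) : ℝ) < t/h + 1 := Int.ceil_lt_add_one _
    have h6 : (k:ℝ)*h < t := (lt_div_iff₀ hh).mp (by linarith)
    unfold mlPhi
    rw [max_eq_left (by linarith : (0:ℝ) ≤ t - (k:ℝ)*h)]

end Main
end
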